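/- Let E be an election over candidate set C with party partition 𝒫, let p ∈ P ∈ 𝒫 and w ∈ P_w ∈ 𝒫 with P_w ≠ P, and define Δ(c) = |{v ∈ V : w ≻_v c ≻_v p}| − |{v ∈ V : p ≻_v c ≻_v w}| for each candidate c. For each party P̃ ∈ 𝒫 \ {P, P_w} choose a candidate c_{P̃} ∈ P̃ maximizing Δ over P̃, and set C̃ = {p, w} ∪ {c_{P̃} : P̃ ∈ 𝒫 \ {P, P_w}}. Then for every nominee set C' (one candidate per party) with p, w ∈ C', the Borda scores in the reduced elections satisfy score_{E_{C̃}}(w) − score_{E_{C̃}}(p) ≥ score_{E_{C'}}(w) − score_{E_{C'}}(p). -/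

import Mathlib

open scoped Classical

noncomputable section

/-- The Borda score of candidate `c` in the election with nominee set `C'`. -/
def bordaScore {C V : Type*} [Fintype V] (pref : V → C → C → Prop)
    (C' : Finset C) (c : C) : ℕ :=
  ∑ v : V, (C'.filter fun c' => pref v c c').card

/-- `C'` contains exactly one nominee of each party of `Ps`. -/
def IsNomineeSet {C : Type*} (Ps : Finset (Finset C)) (C' : Finset C) : Prop :=
  ∀ Pt ∈ Ps, (C' ∩ Pt).card = 1

/-- `Ps` is a partition of the candidate set into nonempty parties. -/
def IsPartition {C : Type*} [Fintype C] (Ps : Finset (Finset C)) : Prop :=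
  (∀ Pt ∈ Ps, Pt.Nonempty) ∧ ∀ c : C, ∃! Pt, Pt ∈ Ps ∧ c ∈ Pt

/-- `Δ(c) = |{v : w ≻_v c ≻_v p}| − |{v : p ≻_v c ≻_v w}|`. -/
def delta {C V : Type*} [Fintype V] (pref : V → C → C → Prop) (p w c : C) : ℤ :=
  ((Finset.univ.filter fun v : V => pref v w c ∧ pref v c p).card : ℤ)
    - ((Finset.univ.filter fun v : V => pref v p c ∧ pref v c w).card : ℤ)

/-- Per-candidate contribution to the Borda gap between `w` and `p`. -/
def fgap {C V : Type*} [Fintype V] (pref : V → C → C → Prop) (p w c : C) : ℤ :=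
  ((Finset.univ.filter fun v : V => pref v w c).card : ℤ)
    - ((Finset.univ.filter fun v : V => pref v p c).card : ℤ)

lemma gap_eq {C V : Type*} [Fintype V] (pref : V → C → C → Prop) (p w : C)
    (C' : Finset C) :
    (bordaScore pref C' w : ℤ) - (bordaScore pref C' p : ℤ)
      = ∑ c ∈ C', fgap pref p w c := by
  unfold bordaScore fgap
  simp only [Finset.card_filter]
  push_cast
  rw [Finset.sum_sub_distrib]
  congr 1 <;> exact Finset.sum_comm

lemma fgap_eq_delta {C V : Type*} [Fintype V] (pref : V → C → C → Prop)
    (hpref : ∀ v : V, IsStrictTotalOrder C (pref v)) (p w c : C)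
    (hcp : c ≠ p) (hcw : c ≠ w) :
    fgap pref p w c = delta pref p w c := by
  unfold fgap delta
  simp only [Finset.card_filter]
  push_cast
  rw [← Finset.sum_sub_distrib, ← Finset.sum_sub_distrib]
  apply Finset.sum_congr rfl
  intro v _
  haveI := hpref v
  rcases trichotomous_of (pref v) c p with h1 | h1 | h1
  · rcases trichotomous_of (pref v) c w with h2 | h2 | h2
    · simp [h1, h2, asymm h1, asymm h2]
    · exact absurd h2 hcw
    · simp [h1, h2, asymm h1, asymm h2]
  · exact absurd h1 hcp
  · rcases trichotomous_of (pref v) c w with h2 | h2 | h2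
    · simp [h1, h2, asymm h1, asymm h2]
    · exact absurd h2 hcw
    · simp [h1, h2, asymm h1, asymm h2]

/-- nominating, from each party other than `P` and `P_w`, a candidate
maximizing `Δ` yields a reduced election in which the Borda score advantage of `w`
over `p` is at least as large as in any reduced election containing `p` and `w`. -/
theorem greedy_nomination_maximizes_borda_gap
    {C V : Type*} [Fintype C] [Fintype V]
    (pref : V → C → C → Prop) (hpref : ∀ v : V, IsStrictTotalOrder C (pref v))
    (Ps : Finset (Finset C)) (hpart : IsPartition Ps)
    (P Pw : Finset C) (hP : P ∈ Ps) (hPw : Pw ∈ Ps) (hPPw : Pw ≠ P)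
    (p w : C) (hp : p ∈ P) (hw : w ∈ Pw)
    (ch : Finset C → C)
    (hch : ∀ Pt ∈ Ps \ {P, Pw},
      ch Pt ∈ Pt ∧ ∀ c ∈ Pt, delta pref p w c ≤ delta pref p w (ch Pt))
    (C' : Finset C) (hC' : IsNomineeSet Ps C') (hpC' : p ∈ C') (hwC' : w ∈ C') :
    (bordaScore pref C' w : ℤ) - (bordaScore pref C' p : ℤ)
      ≤ (bordaScore pref (insert p (insert w ((Ps \ {P, Pw}).image ch))) w : ℤ)
        - (bordaScore pref (insert p (insert w ((Ps \ {P, Pw}).image ch))) p : ℤ) := by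
  classical
  obtain ⟨hne, huniq⟩ := hpart
  have hdisj : ∀ ⦃Pt : Finset C⦄, Pt ∈ Ps → ∀ ⦃Pt' : Finset C⦄, Pt' ∈ Ps →
      ∀ ⦃c : C⦄, c ∈ Pt → c ∈ Pt' → Pt = Pt' :=
    fun Pt hPt Pt' hPt' c hc hc' => (huniq c).unique ⟨hPt, hc⟩ ⟨hPt', hc'⟩
  have hpw : p ≠ w := fun h => hPPw (hdisj hPw hP hw (h ▸ hp))
  have hSPs : ∀ Pt ∈ Ps \ {P, Pw}, Pt ∈ Ps ∧ Pt ≠ P ∧ Pt ≠ Pw := by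
    intro Pt hPt
    rw [Finset.mem_sdiff, Finset.mem_insert, Finset.mem_singleton] at hPt
    tauto
  have hpS : ∀ Pt ∈ Ps \ {P, Pw}, p ∉ Pt := fun Pt hPt hpPt =>
    (hSPs Pt hPt).2.1 (hdisj (hSPs Pt hPt).1 hP hpPt hp)
  have hwS : ∀ Pt ∈ Ps \ {P, Pw}, w ∉ Pt := fun Pt hPt hwPt =>
    (hSPs Pt hPt).2.2 (hdisj (hSPs Pt hPt).1 hPw hwPt hw)
  -- key gap formula
  have key : ∀ C'' : Finset C, p ∈ C'' → w ∈ C'' →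
      (bordaScore pref C'' w : ℤ) - (bordaScore pref C'' p : ℤ)
        = fgap pref p w p + fgap pref p w w
          + ∑ c ∈ (C''.erase p).erase w, delta pref p w c := by
    intro C'' hpC hwC
    rw [gap_eq]
    rw [← Finset.add_sum_erase _ _ hpC]
    have hw' : w ∈ C''.erase p := Finset.mem_erase.mpr ⟨fun h => hpw h.symm, hwC⟩
    rw [← Finset.add_sum_erase _ _ hw', ← add_assoc]
    congr 1
    apply Finset.sum_congr rfl
    intro c hc
    rw [Finset.mem_erase, Finset.mem_erase] at hc
    exact fgap_eq_delta pref hpref p w c hc.2.1 hc.1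
  -- nominee selection function of C'
  have hex : ∀ Pt ∈ Ps, (C' ∩ Pt).Nonempty := fun Pt h =>
    Finset.card_pos.mp (by rw [hC' Pt h]; norm_num)
  set nom : Finset C → C := fun Pt =>
    if h : (C' ∩ Pt).Nonempty then h.choose else p with hnomdef
  have hnommem : ∀ Pt ∈ Ps, nom Pt ∈ C' ∩ Pt := by
    intro Pt h
    rw [hnomdef]
    simp only [dif_pos (hex Pt h)]
    exact (hex Pt h).choose_spec
  have hnomuniq : ∀ Pt ∈ Ps, ∀ x ∈ C' ∩ Pt, x = nom Pt := by
    intro Pt h x hx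
    exact Finset.card_le_one.mp (le_of_eq (hC' Pt h)) x hx (nom Pt) (hnommem Pt h)
  -- the residual set of C' is the image of nom
  have hTim : (C'.erase p).erase w = (Ps \ {P, Pw}).image nom := by
    ext c
    simp only [Finset.mem_erase, Finset.mem_image]
    constructor
    · rintro ⟨hcw, hcp, hcC'⟩
      obtain ⟨Pt, ⟨hPt, hcPt⟩, -⟩ := huniq c
      have hPtne : Pt ≠ P := by
        rintro rfl
        exact hcp ((hnomuniq Pt hPt c (Finset.mem_inter.mpr ⟨hcC', hcPt⟩)).trans
          (hnomuniq Pt hPt p (Finset.mem_inter.mpr ⟨hpC', hp⟩)).symm)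
      have hPtnw : Pt ≠ Pw := by
        rintro rfl
        exact hcw ((hnomuniq Pt hPt c (Finset.mem_inter.mpr ⟨hcC', hcPt⟩)).trans
          (hnomuniq Pt hPt w (Finset.mem_inter.mpr ⟨hwC', hw⟩)).symm)
      refine ⟨Pt, ?_, (hnomuniq Pt hPt c (Finset.mem_inter.mpr ⟨hcC', hcPt⟩)).symm⟩
      rw [Finset.mem_sdiff, Finset.mem_insert, Finset.mem_singleton]
      exact ⟨hPt, by tauto⟩
    · rintro ⟨Pt, hPt, rfl⟩
      have hm := hnommem Pt (hSPs Pt hPt).1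
      rw [Finset.mem_inter] at hm
      exact ⟨fun h => hwS Pt hPt (h ▸ hm.2), fun h => hpS Pt hPt (h ▸ hm.2), hm.1⟩
  -- the residual set of the greedy nominee set
  have hchmem : ∀ Pt ∈ Ps \ {P, Pw}, ch Pt ∈ Pt := fun Pt h => (hch Pt h).1
  have hpnotin : p ∉ insert w ((Ps \ {P, Pw}).image ch) := by
    simp only [Finset.mem_insert, Finset.mem_image, not_or, not_exists]
    refine ⟨hpw, fun Pt h => hpS Pt h.1 (h.2 ▸ hchmem Pt h.1)⟩
  have hwnotin : w ∉ (Ps \ {P, Pw}).image ch := by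
    simp only [Finset.mem_image, not_exists]
    exact fun Pt h => hwS Pt h.1 (h.2 ▸ hchmem Pt h.1)
  have hTim' : (((insert p (insert w ((Ps \ {P, Pw}).image ch))).erase p).erase w)
      = (Ps \ {P, Pw}).image ch := by
    rw [Finset.erase_insert hpnotin, Finset.erase_insert hwnotin]
  -- put it together
  rw [key C' hpC' hwC',
    key _ (Finset.mem_insert_self _ _)
      (Finset.mem_insert_of_mem (Finset.mem_insert_self _ _)),
    hTim, hTim']
  apply add_le_add_right
  rw [Finset.sum_image (fun x hx y hy h => hdisj (hSPs x hx).1 (hSPs y hy).1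
        (Finset.mem_inter.mp (hnommem x (hSPs x hx).1)).2
        (by rw [h]; exact (Finset.mem_inter.mp (hnommem y (hSPs y hy).1)).2)),
    Finset.sum_image (fun x hx y hy h => hdisj (hSPs x hx).1 (hSPs y hy).1
        (hchmem x hx) (by rw [h]; exact hchmem y hy))]
  exact Finset.sum_le_sum fun Pt hPt =>
    (hch Pt hPt).2 (nom Pt) (Finset.mem_inter.mp (hnommem Pt (hSPs Pt hPt).1)).2
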